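/- Let α > 0 and let τ : ℝ → ℝ be twice differentiable with τ(t) > 0 for all t, τ(0) = 1, τ'(0) = 0, and τ''(t) = α / (2 τ(t)^(1+α)) for all t ∈ ℝ. Then τ'(t) → 1 as t → +∞. -/

import Mathlib

open Real Filter

/-- The derivative of the solution of the scaling ODE tends to `1` as `t → +∞`. -/
theorem scaling_ode_deriv_tendsto_one (α : ℝ) (hα : 0 < α) (τ τ' : ℝ → ℝ)
    (hpos : ∀ t, 0 < τ t) (hτ0 : τ 0 = 1) (hτ'0 : τ' 0 = 0)
    (hd1 : ∀ t, HasDerivAt τ (τ' t) t)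
    (hd2 : ∀ t, HasDerivAt τ' (α / (2 * τ t ^ (1 + α))) t) :
    Filter.Tendsto τ' Filter.atTop (nhds 1) := by
  have hτne : ∀ t, τ t ≠ 0 := fun t => (hpos t).ne'
  -- energy is constant
  have hE : ∀ t, HasDerivAt (fun t => τ' t ^ 2 + τ t ^ (-α)) 0 t := by
    intro t
    have h1 : HasDerivAt (fun t => τ' t ^ 2)
        ((2 : ℕ) * τ' t ^ 1 * (α / (2 * τ t ^ (1 + α)))) t := (hd2 t).pow 2
    have h2 : HasDerivAt (fun t => τ t ^ (-α)) (τ' t * (-α) * τ t ^ (-α - 1)) t :=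
      (hd1 t).rpow_const (Or.inl (hτne t))
    have h := h1.add h2
    refine h.congr_deriv ?_
    have hτp := hpos t
    have e1 : τ t ^ (-α - 1) = (τ t ^ (1 + α))⁻¹ := by
      rw [← Real.rpow_neg hτp.le]; ring_nf
    have hne : τ t ^ (1 + α) ≠ 0 := (Real.rpow_pos_of_pos hτp _).ne'
    rw [e1]
    field_simp
    ring
  have hEconst : ∀ t, τ' t ^ 2 + τ t ^ (-α) = 1 := by
    have hconst := is_const_of_deriv_eq_zero (f := fun t => τ' t ^ 2 + τ t ^ (-α))
      (fun t => (hE t).differentiableAt) (fun t => (hE t).deriv)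
    intro t
    have h := hconst t 0
    simpa [hτ0, hτ'0] using h
  -- τ' is strictly monotone
  have hd2' : ∀ t, deriv τ' t = α / (2 * τ t ^ (1 + α)) := fun t => (hd2 t).deriv
  have hmono : StrictMono τ' := by
    apply strictMono_of_deriv_pos
    intro t
    rw [hd2' t]
    have h := Real.rpow_pos_of_pos (hpos t) (1 + α)
    positivity
  have hτ'nonneg : ∀ t ≥ 0, 0 ≤ τ' t := by
    intro t ht
    rcases eq_or_lt_of_le ht with h | h
    · rw [← h, hτ'0]
    · have := hmono h
      rw [hτ'0] at this
      exact this.le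
  have hτ'1 : 0 < τ' 1 := by
    have := hmono (show (0:ℝ) < 1 by norm_num)
    rwa [hτ'0] at this
  -- τ tends to atTop
  have hbound : ∀ t ≥ (1:ℝ), τ' 1 * (t - 1) ≤ τ t - τ 1 := by
    have h := (convex_Ici (1:ℝ)).mul_sub_le_image_sub_of_le_deriv
      (f := τ) (C := τ' 1)
      (fun x _ => (hd1 x).continuousAt.continuousWithinAt)
      (fun x _ => (hd1 x).differentiableAt.differentiableWithinAt)
      (fun x hx => by
        rw [(hd1 x).deriv]
        exact (hmono.monotone (le_of_lt (by simpa using hx))).trans_eq rfl)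
    intro t ht
    exact h 1 (Set.mem_Ici.mpr le_rfl) t (Set.mem_Ici.mpr ht) ht
  have hτtop : Tendsto τ atTop atTop := by
    apply tendsto_atTop_mono' atTop
      (show ∀ᶠ t in atTop, τ 1 + τ' 1 * (t - 1) ≤ τ t by
        filter_upwards [eventually_ge_atTop (1:ℝ)] with t ht
        linarith [hbound t ht])
    apply tendsto_atTop_add_const_left
    exact (tendsto_atTop_add_const_right atTop (-1) tendsto_id).const_mul_atTop hτ'1
  -- conclude
  have hlim : Tendsto (fun t => Real.sqrt (1 - τ t ^ (-α))) atTop (nhds 1) := by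
    have h0 : Tendsto (fun t => (1:ℝ) - τ t ^ (-α)) atTop (nhds 1) := by
      have := (tendsto_rpow_neg_atTop hα).comp hτtop
      simpa using tendsto_const_nhds.sub this
    have := (Real.continuous_sqrt.continuousAt (x := (1:ℝ))).tendsto.comp h0
    simpa [Function.comp_def] using this
  apply hlim.congr'
  filter_upwards [eventually_ge_atTop (0:ℝ)] with t ht
  have h1 : τ' t ^ 2 = 1 - τ t ^ (-α) := by linarith [hEconst t]
  rw [← h1, Real.sqrt_sq (hτ'nonneg t ht)]
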